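/- Let m be an integer, let p₁, …, p_k be distinct primes, let q₀ = p₁p₂⋯p_k, and for each j let R_j be a subset of {0, 1, …, p_j − 1}. Let R₀ = { r ∈ {0, 1, …, q₀ − 1} : for every j there exists r_j ∈ R_j with r ≡ r_j (mod p_j) }. Then G(q₀, R₀, m) = ∏_{j=1}^{k} G(p_j, R_j, m). -/

import Mathlib

open scoped Classical

/-- `e(x) = exp(2πix)`. -/
noncomputable def e (x : ℝ) : ℂ := Complex.exp (2 * (Real.pi : ℂ) * Complex.I * (x : ℂ))

/-- `(μ/φ)(n) = μ(n)/φ(n)`. -/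
noncomputable def muphi (n : ℕ) : ℂ :=
  ((ArithmeticFunction.moebius n : ℤ) : ℂ) / (Nat.totient n : ℂ)

/-- The arithmetic factor
`G(Q, R, m) = Q⁻³ ∑_{w ∣ Q} ∑_{1 ≤ a ≤ w, (a,w)=1} e(-am/w)
  (∑_{ℓ=0}^{Q-1} (μ/φ)(Q/gcd(Q, a(Q/w)+ℓ)) ∑_{r ∈ R} e(-ℓr/Q))³`. -/
noncomputable def G (Q : ℕ) (R : Finset ℤ) (m : ℤ) : ℂ :=
  ((Q : ℂ) ^ 3)⁻¹ * ∑ w ∈ Q.divisors,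
    ∑ a ∈ (Finset.Icc 1 w).filter (fun a => Nat.gcd a w = 1),
      e (-((a : ℝ) * (m : ℝ) / (w : ℝ))) *
        (∑ ℓ ∈ Finset.range Q,
          muphi (Q / Nat.gcd Q (a * (Q / w) + ℓ)) *
            ∑ r ∈ R, e (-((ℓ : ℝ) * (r : ℝ) / (Q : ℝ)))) ^ 3

lemma e_add (x y : ℝ) : e (x + y) = e x * e y := by
  simp only [e, Complex.ofReal_add, mul_add, Complex.exp_add]

lemma e_int (n : ℤ) : e n = 1 := by
  simp only [e]
  rw [show (2 * (Real.pi : ℂ) * Complex.I * ((n : ℝ) : ℂ)) = (n : ℤ) * (2 * Real.pi * Complex.I) by push_cast; ring]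
  exact Complex.exp_int_mul_two_pi_mul_I n

lemma e_zero : e 0 = 1 := by simpa using e_int 0

lemma e_add_int (x : ℝ) (n : ℤ) : e (x + n) = e x := by
  rw [e_add, e_int, mul_one]

lemma e_sum {ι : Type*} (s : Finset ι) (f : ι → ℝ) : e (∑ i ∈ s, f i) = ∏ i ∈ s, e (f i) := by
  classical
  induction s using Finset.cons_induction with
  | empty => simpa using e_zero
  | cons a s ha ih => rw [Finset.sum_cons, Finset.prod_cons, e_add, ih]

lemma e_eq_of_modeq {Q : ℕ} (hQ : Q ≠ 0) {a b : ℤ} (h : a ≡ b [ZMOD (Q : ℤ)]) :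
    e ((a : ℝ) / Q) = e ((b : ℝ) / Q) := by
  obtain ⟨t, ht⟩ := h.dvd
  have hb' : b = Q * t + a := sub_eq_iff_eq_add.mp ht
  have hQR : (Q : ℝ) ≠ 0 := Nat.cast_ne_zero.mpr hQ
  have hdiv : (b : ℝ) / Q = a / Q + t := by
    rw [hb']; push_cast; field_simp; ring
  rw [hdiv, e_add_int]

lemma gcd_prod {ι : Type*} (s : Finset ι) (f : ι → ℕ)
    (h : Set.Pairwise s (Function.onFun Nat.Coprime f)) (x : ℕ) :
    Nat.gcd (∏ i ∈ s, f i) x = ∏ i ∈ s, Nat.gcd (f i) x := by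
  classical
  induction s using Finset.cons_induction with
  | empty => simp
  | cons a s ha ih =>
    rw [Finset.prod_cons, Finset.prod_cons, Nat.gcd_comm, Nat.Coprime.gcd_mul x ?cop,
      Nat.gcd_comm x (f a), Nat.gcd_comm x (∏ i ∈ s, f i),
      ih (h.mono (by simp [Finset.subset_iff]))]
    case cop =>
      exact Nat.Coprime.prod_right fun i hi =>
        h (Finset.mem_cons_self a s) (Finset.mem_cons_of_mem hi) (fun he => ha (he ▸ hi))

lemma muphi_prod {ι : Type*} (s : Finset ι) (f : ι → ℕ)
    (h : Set.Pairwise s (Function.onFun Nat.Coprime f)) :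
    muphi (∏ i ∈ s, f i) = ∏ i ∈ s, muphi (f i) := by
  classical
  induction s using Finset.cons_induction with
  | empty => simp [muphi]
  | cons a s ha ih =>
    have hcop : Nat.Coprime (f a) (∏ i ∈ s, f i) :=
      Nat.Coprime.prod_right fun i hi =>
        h (Finset.mem_cons_self a s) (Finset.mem_cons_of_mem hi) (fun he => ha (he ▸ hi))
    rw [Finset.prod_cons, Finset.prod_cons, ← ih (h.mono (by simp [Finset.subset_iff]))]
    simp only [muphi]
    rw [ArithmeticFunction.isMultiplicative_moebius.map_mul_of_coprime hcop,
      Nat.totient_mul hcop]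
    push_cast
    ring

lemma nat_prod_div {ι : Type*} (s : Finset ι) (f g : ι → ℕ) (h : ∀ i ∈ s, g i ∣ f i) :
    (∏ i ∈ s, f i) / (∏ i ∈ s, g i) = ∏ i ∈ s, f i / g i := by
  classical
  induction s using Finset.cons_induction with
  | empty => simp
  | cons a s ha ih =>
    rw [Finset.prod_cons, Finset.prod_cons, Finset.prod_cons,
      Nat.mul_div_mul_comm (h a (Finset.mem_cons_self a s))
        (Finset.prod_dvd_prod_of_dvd _ _ fun i hi => h i (Finset.mem_cons_of_mem hi)),
      ih fun i hi => h i (Finset.mem_cons_of_mem hi)]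

lemma prime_gcd_congr {q : ℕ} (hq : q.Prime) {x y : ℕ} (h : q ∣ x ↔ q ∣ y) :
    Nat.gcd q x = Nat.gcd q y := by
  by_cases hd : q ∣ x
  · rw [Nat.gcd_eq_left hd, Nat.gcd_eq_left (h.mp hd)]
  · have h1 : Nat.Coprime q x := (Nat.coprime_or_dvd_of_prime hq x).resolve_right hd
    have h2 : Nat.Coprime q y := (Nat.coprime_or_dvd_of_prime hq y).resolve_right
      (fun hy => hd (h.mpr hy))
    rw [h1, h2]

noncomputable def inn (Q : ℕ) (R : Finset ℤ) (b : ℕ) : ℂ :=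
  ∑ ℓ ∈ Finset.range Q,
    muphi (Q / Nat.gcd Q (b + ℓ)) * ∑ r ∈ R, e (-((ℓ : ℝ) * (r : ℝ) / (Q : ℝ)))

lemma G_eq (Q : ℕ) (hQ : Q ≠ 0) (R : Finset ℤ) (m : ℤ) :
    G Q R m = ((Q : ℂ) ^ 3)⁻¹ *
      ∑ b ∈ Finset.range Q, e (-((b : ℝ) * (m : ℝ) / (Q : ℝ))) * (inn Q R b) ^ 3 := by
  classical
  have hQ0 : 0 < Q := Nat.pos_of_ne_zero hQ
  set g : ℕ → ℂ := fun b => e (-((b : ℝ) * (m : ℝ) / (Q : ℝ))) * (inn Q R b) ^ 3 with hg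
  rw [G]
  congr 1
  rw [Finset.sum_sigma']
  have step1 :
      ∑ x ∈ (Q.divisors.sigma fun w => (Finset.Icc 1 w).filter fun a => Nat.gcd a w = 1),
        (e (-((x.2 : ℝ) * (m : ℝ) / (x.1 : ℝ))) *
          (∑ ℓ ∈ Finset.range Q,
            muphi (Q / Nat.gcd Q (x.2 * (Q / x.1) + ℓ)) *
              ∑ r ∈ R, e (-((ℓ : ℝ) * (r : ℝ) / (Q : ℝ)))) ^ 3) =
      ∑ b ∈ Finset.Icc 1 Q, g b := by
    refine Finset.sum_nbij' (fun x => x.2 * (Q / x.1))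
      (fun b => ⟨Q / Nat.gcd Q b, b / Nat.gcd Q b⟩) ?_ ?_ ?_ ?_ ?_
    · rintro ⟨w, a⟩ hx
      simp only [Finset.mem_sigma, Nat.mem_divisors, Finset.mem_filter, Finset.mem_Icc] at hx
      obtain ⟨⟨hw, -⟩, ⟨ha1, ha2⟩, -⟩ := hx
      have hw0 : w ≠ 0 := by rintro rfl; omega
      have hwd : Q / w ≠ 0 := by
        intro h
        rw [Nat.div_eq_zero_iff] at h
        exact absurd (Nat.le_of_dvd hQ0 hw) (by omega)
      simp only [Finset.mem_Icc]
      refine ⟨Nat.one_le_iff_ne_zero.mpr (Nat.mul_ne_zero (by omega) hwd), ?_⟩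
      calc a * (Q / w) ≤ w * (Q / w) := Nat.mul_le_mul_right _ ha2
        _ = Q := Nat.mul_div_cancel' hw
    · intro b hb
      simp only [Finset.mem_Icc] at hb
      have hgp : 0 < Nat.gcd Q b := Nat.gcd_pos_of_pos_left _ hQ0
      have hgd : Nat.gcd Q b ∣ Q := Nat.gcd_dvd_left _ _
      have hgb : Nat.gcd Q b ∣ b := Nat.gcd_dvd_right _ _
      simp only [Finset.mem_sigma, Nat.mem_divisors, Finset.mem_filter, Finset.mem_Icc]
      refine ⟨⟨Nat.div_dvd_of_dvd hgd, hQ⟩, ⟨?_, ?_⟩, ?_⟩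
      · exact (Nat.le_div_iff_mul_le hgp).mpr
          (by simpa using Nat.le_of_dvd (by omega) hgb)
      · exact Nat.div_le_div_right hb.2
      · exact (Nat.coprime_div_gcd_div_gcd hgp).symm
    · rintro ⟨w, a⟩ hx
      simp only [Finset.mem_sigma, Nat.mem_divisors, Finset.mem_filter, Finset.mem_Icc] at hx
      obtain ⟨⟨hw, -⟩, ⟨ha1, ha2⟩, hcop⟩ := hx
      have hw0 : w ≠ 0 := by rintro rfl; omega
      have hwd0 : Q / w ≠ 0 := by
        intro h
        rw [Nat.div_eq_zero_iff] at h
        exact absurd (Nat.le_of_dvd hQ0 hw) (by omega)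
      have hgcd : Nat.gcd Q (a * (Q / w)) = Q / w := by
        calc Nat.gcd Q (a * (Q / w)) = Nat.gcd ((Q / w) * w) ((Q / w) * a) := by
              rw [Nat.div_mul_cancel hw, Nat.mul_comm a (Q / w)]
          _ = (Q / w) * Nat.gcd w a := Nat.gcd_mul_left _ _ _
          _ = Q / w := by rw [Nat.gcd_comm w a, hcop, Nat.mul_one]
      have h1 : Q / (Q / w) = w := Nat.div_div_self hw hQ
      ext
      · simp [hgcd, h1]
      · simp [hgcd, Nat.mul_div_cancel _ (Nat.pos_of_ne_zero hwd0)]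
    · intro b hb
      simp only [Finset.mem_Icc] at hb
      have hgd : Nat.gcd Q b ∣ Q := Nat.gcd_dvd_left _ _
      have hgb : Nat.gcd Q b ∣ b := Nat.gcd_dvd_right _ _
      simp only
      rw [Nat.div_div_self hgd hQ, Nat.div_mul_cancel hgb]
    · rintro ⟨w, a⟩ hx
      simp only [Finset.mem_sigma, Nat.mem_divisors, Finset.mem_filter, Finset.mem_Icc] at hx
      obtain ⟨⟨hw, -⟩, ⟨ha1, ha2⟩, hcop⟩ := hx
      have hw0 : w ≠ 0 := by rintro rfl; omega
      have hwd0 : Q / w ≠ 0 := by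
        intro h
        rw [Nat.div_eq_zero_iff] at h
        exact absurd (Nat.le_of_dvd hQ0 hw) (by omega)
      have harg : -((a : ℝ) * (m : ℝ) / (w : ℝ)) =
          -(((a * (Q / w) : ℕ) : ℝ) * (m : ℝ) / (Q : ℝ)) := by
        have hQw : (Q : ℝ) = (w : ℝ) * ((Q / w : ℕ) : ℝ) := by
          rw [← Nat.cast_mul]
          exact_mod_cast (Nat.mul_div_cancel' hw).symm
        rw [hQw]
        push_cast
        have hw' : (w : ℝ) ≠ 0 := Nat.cast_ne_zero.mpr hw0
        have hd' : ((Q / w : ℕ) : ℝ) ≠ 0 := Nat.cast_ne_zero.mpr hwd0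
        field_simp
      simp only [hg, inn]
      rw [harg]
  rw [step1]
  have hQIcc : Finset.Icc 1 Q = insert Q (Finset.Ico 1 Q) := by
    ext x; simp only [Finset.mem_Icc, Finset.mem_insert, Finset.mem_Ico]; omega
  have hQrange : Finset.range Q = insert 0 (Finset.Ico 1 Q) := by
    ext x; simp only [Finset.mem_range, Finset.mem_insert, Finset.mem_Ico]; omega
  have hgQ : g Q = g 0 := by
    have hQR : (Q : ℝ) ≠ 0 := Nat.cast_ne_zero.mpr hQ
    have h3 : inn Q R Q = inn Q R 0 := Finset.sum_congr rfl (fun ℓ _ => by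
      rw [show Q + ℓ = ℓ + 1 * Q by ring, Nat.gcd_add_mul_right_right, Nat.zero_add])
    have h1 : e (-((Q : ℝ) * (m : ℝ) / (Q : ℝ))) = e (-(((0 : ℕ) : ℝ) * (m : ℝ) / (Q : ℝ))) := by
      rw [show -((Q : ℝ) * (m : ℝ) / (Q : ℝ)) = 0 + ((-m : ℤ) : ℝ) by push_cast; field_simp; ring,
        show -(((0 : ℕ) : ℝ) * (m : ℝ) / (Q : ℝ)) = (0 : ℝ) by push_cast; simp]
      rw [e_add_int]
    simp only [hg, h1, h3]
  rw [hQIcc, hQrange, Finset.sum_insert (by simp), Finset.sum_insert (by simp), hgQ]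

section CRT

variable {k : ℕ} {p : Fin k → ℕ}

lemma hcop_of (hp : ∀ j, (p j).Prime) (hinj : Function.Injective p) :
    Pairwise (Function.onFun Nat.Coprime p) :=
  fun i j hij => (Nat.coprime_primes (hp i) (hp j)).mpr (fun h => hij (hinj h))

lemma N_pos (hp : ∀ j, (p j).Prime) : 0 < ∏ j, p j :=
  Finset.prod_pos fun j _ => (hp j).pos

lemma M_mul (hp : ∀ j, (p j).Prime) (j : Fin k) :
    p j * ((∏ i, p i) / p j) = ∏ i, p i :=
  Nat.mul_div_cancel' (Finset.dvd_prod_of_mem p (Finset.mem_univ j))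

lemma M_eq (hp : ∀ j, (p j).Prime) (j : Fin k) :
    (∏ i, p i) / p j = ∏ i ∈ Finset.univ.erase j, p i := by
  have h := (Finset.mul_prod_erase Finset.univ p (Finset.mem_univ j)).symm
  rw [h, Nat.mul_div_cancel_left _ (hp j).pos]

lemma M_dvd (hp : ∀ j, (p j).Prime) (hinj : Function.Injective p) {i j : Fin k}
    (hij : i ≠ j) : p i ∣ (∏ t, p t) / p j := by
  rw [M_eq hp]
  exact Finset.dvd_prod_of_mem p (Finset.mem_erase.mpr ⟨hij, Finset.mem_univ i⟩)

lemma M_not_dvd (hp : ∀ j, (p j).Prime) (hinj : Function.Injective p) (j : Fin k) :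
    ¬ p j ∣ (∏ t, p t) / p j := by
  rw [M_eq hp]
  intro h
  obtain ⟨t, ht, hdvd⟩ := ((hp j).prime.dvd_finset_prod_iff p).mp h
  have : p j = p t := ((Nat.prime_dvd_prime_iff_eq (hp j) (hp t)).mp hdvd)
  exact (Finset.mem_erase.mp ht).1 (hinj this.symm)

lemma M_cast_ne_zero (hp : ∀ j, (p j).Prime) (hinj : Function.Injective p) (j : Fin k) :
    ((((∏ t, p t) / p j : ℕ) : ZMod (p j))) ≠ 0 := by
  rw [Ne, ZMod.natCast_eq_zero_iff]
  exact M_not_dvd hp hinj j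

/-- CRT congruence: if `b ≡ c j * M j` mod each `p j`, then `b ≡ ∑ c j * M j` mod `N`. -/
lemma crt_cong (hp : ∀ j, (p j).Prime) (hinj : Function.Injective p)
    (c : Fin k → ℕ) (b : ℕ)
    (h : ∀ j, ((b : ℕ) : ZMod (p j)) = ((c j * ((∏ t, p t) / p j) : ℕ) : ZMod (p j))) :
    ((b : ℕ) : ZMod (∏ t, p t)) = ((∑ j, c j * ((∏ t, p t) / p j) : ℕ) : ZMod (∏ t, p t)) := by
  classical
  apply (ZMod.prodEquivPi p (hcop_of hp hinj)).injective
  have hnat : ∀ (n : ℕ) (i : Fin k),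
      (ZMod.prodEquivPi p (hcop_of hp hinj)) (n : ZMod (∏ t, p t)) i = (n : ZMod (p i)) := by
    intro n i
    rw [map_natCast, Pi.natCast_apply]
  funext i
  rw [hnat, hnat]
  push_cast
  rw [Finset.sum_eq_single i]
  · exact_mod_cast h i
  · intro j _ hji
    have : (((∏ t, p t) / p j : ℕ) : ZMod (p i)) = 0 := by
      rw [ZMod.natCast_eq_zero_iff]
      exact M_dvd hp hinj hji.symm
    push_cast at this ⊢
    rw [this, mul_zero]
  · intro hi; exact absurd (Finset.mem_univ i) hi

noncomputable def bOf (hcop : Pairwise (Function.onFun Nat.Coprime p)) (y : ∀ j, ZMod (p j)) : ℕ :=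
  ((ZMod.prodEquivPi p hcop).symm
    (fun j => y j * (((∏ t, p t) / p j : ℕ) : ZMod (p j)))).val

lemma bOf_spec (hp : ∀ j, (p j).Prime) (hinj : Function.Injective p)
    (y : ∀ j, ZMod (p j)) (j : Fin k) :
    ((bOf (hcop_of hp hinj) y : ℕ) : ZMod (p j)) =
      y j * (((∏ t, p t) / p j : ℕ) : ZMod (p j)) := by
  haveI : NeZero (∏ t, p t) := ⟨(N_pos hp).ne'⟩
  have h1 : ((bOf (hcop_of hp hinj) y : ℕ) : ZMod (∏ t, p t)) =
      (ZMod.prodEquivPi p (hcop_of hp hinj)).symm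
        (fun j => y j * (((∏ t, p t) / p j : ℕ) : ZMod (p j))) :=
    ZMod.natCast_rightInverse _
  have h2 := congrArg (ZMod.prodEquivPi p (hcop_of hp hinj)) h1
  rw [RingEquiv.apply_symm_apply, map_natCast] at h2
  have h3 := congrFun h2 j
  rwa [Pi.natCast_apply] at h3

lemma sum_range_eq_pi [∀ j, NeZero (p j)] (hp : ∀ j, (p j).Prime) (hinj : Function.Injective p) (F : ℕ → ℂ) :
    ∑ b ∈ Finset.range (∏ t, p t), F b =
      ∑ y : ∀ j, ZMod (p j), F (bOf (hcop_of hp hinj) y) := by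
  classical
  haveI : NeZero (∏ t, p t) := ⟨(N_pos hp).ne'⟩
  letI : ∀ j, Fact (p j).Prime := fun j => ⟨hp j⟩
  have h1 : ∑ b ∈ Finset.range (∏ t, p t), F b = ∑ x : ZMod (∏ t, p t), F x.val := by
    refine Finset.sum_nbij' (fun b => (b : ZMod (∏ t, p t))) (fun x => x.val)
      (fun _ _ => Finset.mem_univ _)
      (fun x _ => Finset.mem_range.mpr (ZMod.val_lt x)) ?_ ?_ ?_
    · intro b hb; exact ZMod.val_cast_of_lt (Finset.mem_range.mp hb)
    · intro x _; exact ZMod.natCast_rightInverse x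
    · intro b hb; rw [ZMod.val_cast_of_lt (Finset.mem_range.mp hb)]
  let E : (∀ j, ZMod (p j)) ≃ ZMod (∏ t, p t) :=
    (Equiv.piCongrRight fun j =>
      Equiv.mulRight₀ ((((∏ t, p t) / p j : ℕ) : ZMod (p j))) (M_cast_ne_zero hp hinj j)).trans
      (ZMod.prodEquivPi p (hcop_of hp hinj)).toEquiv.symm
  have h2 : ∑ y : ∀ j, ZMod (p j), F ((E y).val) = ∑ x : ZMod (∏ t, p t), F x.val :=
    Equiv.sum_comp E (fun x => F x.val)
  rw [h1, ← h2]
  rfl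

lemma bOf_modeq [∀ j, NeZero (p j)] (hp : ∀ j, (p j).Prime) (hinj : Function.Injective p)
    (y : ∀ j, ZMod (p j)) :
    bOf (hcop_of hp hinj) y ≡ ∑ j, (y j).val * ((∏ t, p t) / p j) [MOD ∏ t, p t] := by
  rw [← ZMod.natCast_eq_natCast_iff]
  apply crt_cong hp hinj
  intro j
  rw [bOf_spec hp hinj y j]
  push_cast
  rw [ZMod.natCast_rightInverse (y j)]

lemma e_bOf [∀ j, NeZero (p j)] (hp : ∀ j, (p j).Prime) (hinj : Function.Injective p)
    (c : ℤ) (y : ∀ j, ZMod (p j)) :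
    e (-((bOf (hcop_of hp hinj) y : ℝ) * (c : ℝ) / ((∏ t, p t : ℕ) : ℝ))) =
      ∏ j, e (-(((y j).val : ℝ) * (c : ℝ) / ((p j : ℕ) : ℝ))) := by
  classical
  have hN0 : (∏ t, p t) ≠ 0 := (N_pos hp).ne'
  set b := bOf (hcop_of hp hinj) y with hb
  have h1 : e (-((b : ℝ) * (c : ℝ) / ((∏ t, p t : ℕ) : ℝ))) =
      e (((-(b * c) : ℤ) : ℝ) / ((∏ t, p t : ℕ) : ℝ)) := by
    congr 1; push_cast; ring
  have hmod : (-(b * c) : ℤ) ≡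
      (-((∑ j, (y j).val * ((∏ t, p t) / p j) : ℕ) * c) : ℤ) [ZMOD ((∏ t, p t : ℕ) : ℤ)] :=
    ((Int.natCast_modEq_iff.mpr (bOf_modeq hp hinj y)).mul_right c).neg
  have h2 := e_eq_of_modeq hN0 hmod
  have h3 : ((-((∑ j, (y j).val * ((∏ t, p t) / p j) : ℕ) * c) : ℤ) : ℝ) /
        ((∏ t, p t : ℕ) : ℝ) =
      ∑ j, -(((y j).val : ℝ) * (c : ℝ) / ((p j : ℕ) : ℝ)) := by
    have key : ∀ j, ((((y j).val * ((∏ t, p t) / p j) : ℕ)) : ℝ) * (c : ℝ) /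
        ((∏ t, p t : ℕ) : ℝ) = ((y j).val : ℝ) * (c : ℝ) / ((p j : ℕ) : ℝ) := by
      intro j
      have hpj : ((p j : ℕ) : ℝ) ≠ 0 := Nat.cast_ne_zero.mpr (hp j).ne_zero
      have hMj : (((∏ t, p t) / p j : ℕ) : ℝ) ≠ 0 := by
        refine Nat.cast_ne_zero.mpr fun h0 => hN0 ?_
        rw [← M_mul hp j, h0, Nat.mul_zero]
      have hNc : ((∏ t, p t : ℕ) : ℝ) = ((p j : ℕ) : ℝ) * (((∏ t, p t) / p j : ℕ) : ℝ) := by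
        rw [← Nat.cast_mul]; exact_mod_cast (M_mul hp j).symm
      rw [hNc, Nat.cast_mul]
      field_simp
    rw [Int.cast_neg, Int.cast_mul, Int.cast_natCast, Nat.cast_sum, neg_div,
      Finset.sum_neg_distrib, neg_inj, Finset.sum_mul, Finset.sum_div]
    exact Finset.sum_congr rfl fun j _ => key j
  rw [h1, h2, h3, e_sum]

lemma sum_range_zmod (q : ℕ) [NeZero q] (F : ℕ → ℂ) :
    ∑ b ∈ Finset.range q, F b = ∑ x : ZMod q, F x.val := by
  refine Finset.sum_nbij' (fun b => (b : ZMod q)) (fun x => x.val)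
    (fun _ _ => Finset.mem_univ _)
    (fun x _ => Finset.mem_range.mpr (ZMod.val_lt x)) ?_ ?_ ?_
  · intro b hb; exact ZMod.val_cast_of_lt (Finset.mem_range.mp hb)
  · intro x _; exact ZMod.natCast_rightInverse x
  · intro b hb; rw [ZMod.val_cast_of_lt (Finset.mem_range.mp hb)]

lemma e_congr_int {q : ℕ} (hq : q ≠ 0) (t : ℕ) {r rj : ℤ} (h : r ≡ rj [ZMOD (q : ℤ)]) :
    e (-((t : ℝ) * (r : ℝ) / (q : ℝ))) = e (-((t : ℝ) * (rj : ℝ) / (q : ℝ))) := by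
  have h1 : e (-((t : ℝ) * (r : ℝ) / (q : ℝ))) = e (((-(t * r) : ℤ) : ℝ) / (q : ℝ)) := by
    congr 1; push_cast; ring
  have h2 : e (-((t : ℝ) * (rj : ℝ) / (q : ℝ))) = e (((-(t * rj) : ℤ) : ℝ) / (q : ℝ)) := by
    congr 1; push_cast; ring
  rw [h1, h2]
  exact e_eq_of_modeq hq ((h.mul_left (t : ℤ)).neg)

lemma muphi_factor (hp : ∀ j, (p j).Prime) (hinj : Function.Injective p) (x : ℕ) :
    muphi ((∏ t, p t) / Nat.gcd (∏ t, p t) x) = ∏ j, muphi (p j / Nat.gcd (p j) x) := by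
  classical
  have hg : Nat.gcd (∏ t, p t) x = ∏ j, Nat.gcd (p j) x :=
    gcd_prod Finset.univ p ((hcop_of hp hinj).set_pairwise _) x
  have hdvd : ∀ j ∈ Finset.univ, Nat.gcd (p j) x ∣ p j := fun j _ => Nat.gcd_dvd_left _ _
  rw [hg, nat_prod_div Finset.univ p (fun j => Nat.gcd (p j) x) hdvd]
  apply muphi_prod
  intro i _ j _ hij
  have hdi : p i / Nat.gcd (p i) x ∣ p i := ⟨_, (Nat.div_mul_cancel (Nat.gcd_dvd_left _ _)).symm⟩
  have hdj : p j / Nat.gcd (p j) x ∣ p j := ⟨_, (Nat.div_mul_cancel (Nat.gcd_dvd_left _ _)).symm⟩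
  exact Nat.Coprime.coprime_dvd_left hdi (Nat.Coprime.coprime_dvd_right hdj (hcop_of hp hinj hij))

lemma gcd_bOf [∀ j, NeZero (p j)] (hp : ∀ j, (p j).Prime) (hinj : Function.Injective p)
    (y lam : ∀ j, ZMod (p j)) (j : Fin k) :
    Nat.gcd (p j) (bOf (hcop_of hp hinj) y + bOf (hcop_of hp hinj) lam) =
      Nat.gcd (p j) ((y j).val + (lam j).val) := by
  letI : ∀ i, Fact (p i).Prime := fun i => ⟨hp i⟩
  apply prime_gcd_congr (hp j)
  have h1 : ((bOf (hcop_of hp hinj) y + bOf (hcop_of hp hinj) lam : ℕ) : ZMod (p j)) =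
      (y j + lam j) * (((∏ t, p t) / p j : ℕ) : ZMod (p j)) := by
    rw [Nat.cast_add, bOf_spec hp hinj y j, bOf_spec hp hinj lam j, ← add_mul]
  have h2 : (((y j).val + (lam j).val : ℕ) : ZMod (p j)) = y j + lam j := by
    rw [Nat.cast_add, ZMod.natCast_rightInverse (y j), ZMod.natCast_rightInverse (lam j)]
  rw [← ZMod.natCast_eq_zero_iff, ← ZMod.natCast_eq_zero_iff, h1, h2,
    mul_eq_zero]
  simp [M_cast_ne_zero hp hinj j]

noncomputable def rOf (hcop : Pairwise (Function.onFun Nat.Coprime p)) (v : Fin k → ℤ) : ℤ :=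
  (((ZMod.prodEquivPi p hcop).symm (fun j => ((v j : ℤ) : ZMod (p j)))).val : ℤ)

lemma rOf_spec [∀ j, NeZero (p j)] (hp : ∀ j, (p j).Prime) (hinj : Function.Injective p)
    (v : Fin k → ℤ) (j : Fin k) :
    rOf (hcop_of hp hinj) v ≡ v j [ZMOD ((p j : ℕ) : ℤ)] := by
  haveI : NeZero (∏ t, p t) := ⟨(N_pos hp).ne'⟩
  rw [← ZMod.intCast_eq_intCast_iff]
  have h1 : (((((ZMod.prodEquivPi p (hcop_of hp hinj)).symm
        (fun j => ((v j : ℤ) : ZMod (p j)))).val : ℕ)) : ZMod (∏ t, p t)) =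
      (ZMod.prodEquivPi p (hcop_of hp hinj)).symm (fun j => ((v j : ℤ) : ZMod (p j))) :=
    ZMod.natCast_rightInverse _
  have h2 := congrArg (ZMod.prodEquivPi p (hcop_of hp hinj)) h1
  rw [RingEquiv.apply_symm_apply, map_natCast] at h2
  have h3 := congrFun h2 j
  rw [Pi.natCast_apply] at h3
  rw [rOf, Int.cast_natCast, h3]

lemma rOf_nonneg (hcop : Pairwise (Function.onFun Nat.Coprime p)) (v : Fin k → ℤ) :
    0 ≤ rOf hcop v := Int.natCast_nonneg _

lemma rOf_lt [∀ j, NeZero (p j)] (hp : ∀ j, (p j).Prime) (hinj : Function.Injective p)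
    (v : Fin k → ℤ) : rOf (hcop_of hp hinj) v < ((∏ t, p t : ℕ) : ℤ) := by
  haveI : NeZero (∏ t, p t) := ⟨(N_pos hp).ne'⟩
  rw [rOf]
  exact_mod_cast ZMod.val_lt _

lemma R0_sum [∀ j, NeZero (p j)] (hp : ∀ j, (p j).Prime) (hinj : Function.Injective p)
    (R : Fin k → Finset ℤ) (hR : ∀ j, ∀ r ∈ R j, 0 ≤ r ∧ r < ((p j : ℕ) : ℤ))
    (R₀ : Finset ℤ)
    (hR₀ : R₀ = (Finset.Icc (0 : ℤ) (((∏ t, p t : ℕ) : ℤ) - 1)).filter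
        (fun r => ∀ j, ∃ rj ∈ R j, r ≡ rj [ZMOD ((p j : ℕ) : ℤ)]))
    (lam : ∀ j, ZMod (p j)) :
    ∑ r ∈ R₀, e (-((bOf (hcop_of hp hinj) lam : ℝ) * (r : ℝ) / ((∏ t, p t : ℕ) : ℝ))) =
      ∏ j, ∑ r ∈ R j, e (-(((lam j).val : ℝ) * (r : ℝ) / ((p j : ℕ) : ℝ))) := by
  classical
  haveI : NeZero (∏ t, p t) := ⟨(N_pos hp).ne'⟩
  rw [Finset.prod_univ_sum]
  refine Finset.sum_nbij' (fun r => fun j => r % ((p j : ℕ) : ℤ)) (rOf (hcop_of hp hinj))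
    ?_ ?_ ?_ ?_ ?_
  · -- forward membership
    intro r hr
    rw [hR₀, Finset.mem_filter] at hr
    obtain ⟨-, hcond⟩ := hr
    rw [Fintype.mem_piFinset]
    intro j
    obtain ⟨rj, hrj, hmod⟩ := hcond j
    obtain ⟨h0, hlt⟩ := hR j rj hrj
    have : r % ((p j : ℕ) : ℤ) = rj := by
      rw [show r % ((p j : ℕ) : ℤ) = rj % ((p j : ℕ) : ℤ) from hmod,
        Int.emod_eq_of_lt h0 hlt]
    show r % ((p j : ℕ) : ℤ) ∈ R j
    rwa [this]
  · -- backward membership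
    intro v hv
    rw [hR₀, Finset.mem_filter]
    refine ⟨Finset.mem_Icc.mpr ⟨rOf_nonneg _ v, by
      have := rOf_lt hp hinj v; omega⟩, ?_⟩
    intro j
    exact ⟨v j, Fintype.mem_piFinset.mp hv j, rOf_spec hp hinj v j⟩
  · -- left inverse : rOf (fun j => r % p j) = r  for r ∈ R₀
    intro r hr
    rw [hR₀, Finset.mem_filter, Finset.mem_Icc] at hr
    obtain ⟨⟨h0, h1⟩, -⟩ := hr
    have hNpos : (0 : ℤ) < ((∏ t, p t : ℕ) : ℤ) := by exact_mod_cast N_pos hp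
    have hpi : (fun j => (((r % ((p j : ℕ) : ℤ)) : ℤ) : ZMod (p j))) =
        (ZMod.prodEquivPi p (hcop_of hp hinj)) ((r : ℤ) : ZMod (∏ t, p t)) := by
      rw [map_intCast]
      funext j
      rw [Pi.intCast_apply, ZMod.intCast_eq_intCast_iff]
      exact Int.emod_emod_of_dvd r dvd_rfl
    rw [rOf, hpi, RingEquiv.symm_apply_apply]
    rw [ZMod.val_intCast, Int.emod_eq_of_lt h0 (by omega)]
  · -- right inverse
    intro v hv
    funext j
    have hmod := rOf_spec hp hinj v j
    obtain ⟨h0, hlt⟩ := hR j (v j) (Fintype.mem_piFinset.mp hv j)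
    show rOf (hcop_of hp hinj) v % ((p j : ℕ) : ℤ) = v j
    rw [show rOf (hcop_of hp hinj) v % ((p j : ℕ) : ℤ) = v j % ((p j : ℕ) : ℤ) from hmod,
      Int.emod_eq_of_lt h0 hlt]
  · -- values
    intro r hr
    rw [e_bOf hp hinj r lam]
    apply Finset.prod_congr rfl
    intro j _
    exact e_congr_int (hp j).ne_zero _ (Int.emod_emod_of_dvd r dvd_rfl).symm

lemma inn_factor [∀ j, NeZero (p j)] (hp : ∀ j, (p j).Prime) (hinj : Function.Injective p)
    (R : Fin k → Finset ℤ) (hR : ∀ j, ∀ r ∈ R j, 0 ≤ r ∧ r < ((p j : ℕ) : ℤ))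
    (R₀ : Finset ℤ)
    (hR₀ : R₀ = (Finset.Icc (0 : ℤ) (((∏ t, p t : ℕ) : ℤ) - 1)).filter
        (fun r => ∀ j, ∃ rj ∈ R j, r ≡ rj [ZMOD ((p j : ℕ) : ℤ)]))
    (y : ∀ j, ZMod (p j)) :
    inn (∏ t, p t) R₀ (bOf (hcop_of hp hinj) y) = ∏ j, inn (p j) (R j) ((y j).val) := by
  classical
  have hterm : ∀ lam : ∀ j, ZMod (p j),
      muphi ((∏ t, p t) /
          Nat.gcd (∏ t, p t) (bOf (hcop_of hp hinj) y + bOf (hcop_of hp hinj) lam)) *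
        ∑ r ∈ R₀, e (-(((bOf (hcop_of hp hinj) lam : ℕ) : ℝ) * (r : ℝ) /
          ((∏ t, p t : ℕ) : ℝ))) =
      ∏ j, (muphi (p j / Nat.gcd (p j) ((y j).val + (lam j).val)) *
        ∑ r ∈ R j, e (-(((lam j).val : ℝ) * (r : ℝ) / ((p j : ℕ) : ℝ)))) := by
    intro lam
    rw [muphi_factor hp hinj, R0_sum hp hinj R hR R₀ hR₀ lam, ← Finset.prod_mul_distrib]
    apply Finset.prod_congr rfl
    intro j _
    rw [gcd_bOf hp hinj y lam j]
  have rhs : ∏ j, inn (p j) (R j) ((y j).val) =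
      ∑ lam ∈ Fintype.piFinset (fun j : Fin k => (Finset.univ : Finset (ZMod (p j)))),
        ∏ j, (muphi (p j / Nat.gcd (p j) ((y j).val + ((lam j).val : ℕ))) *
          ∑ r ∈ R j, e (-(((lam j).val : ℝ) * (r : ℝ) / ((p j : ℕ) : ℝ)))) := by
    calc ∏ j, inn (p j) (R j) ((y j).val)
        = ∏ j, ∑ z : ZMod (p j), (muphi (p j / Nat.gcd (p j) ((y j).val + z.val)) *
            ∑ r ∈ R j, e (-((z.val : ℝ) * (r : ℝ) / ((p j : ℕ) : ℝ)))) :=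
          Finset.prod_congr rfl (fun j _ => by rw [inn, sum_range_zmod (p j)])
      _ = _ := Finset.prod_univ_sum _ _
  rw [inn, sum_range_eq_pi hp hinj, rhs, Fintype.piFinset_univ]
  exact Finset.sum_congr rfl (fun lam _ => hterm lam)

end CRT


/-- With `q₀ = p₁⋯p_k` a product of distinct primes, `R_j ⊆ {0,…,p_j-1}` and
`R₀` the set of `r ∈ {0,…,q₀-1}` congruent mod each `p_j` to some element of `R_j`,
the arithmetic factor multiplies: `G(q₀, R₀, m) = ∏_j G(p_j, R_j, m)`. -/
theorem G_factorization (m : ℤ) (k : ℕ) (p : Fin k → ℕ) (hp : ∀ j, (p j).Prime)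
    (hinj : Function.Injective p) (q₀ : ℕ) (hq₀ : q₀ = ∏ j : Fin k, p j)
    (R : Fin k → Finset ℤ) (hR : ∀ j, ∀ r ∈ R j, 0 ≤ r ∧ r < (p j : ℤ))
    (R₀ : Finset ℤ)
    (hR₀ : R₀ = (Finset.Icc (0 : ℤ) ((q₀ : ℤ) - 1)).filter
        (fun r => ∀ j, ∃ rj ∈ R j, r ≡ rj [ZMOD (p j : ℤ)])) :
    G q₀ R₀ m = ∏ j : Fin k, G (p j) (R j) m := by
  classical
  subst hq₀
  haveI : ∀ j, NeZero (p j) := fun j => ⟨(hp j).pos.ne'⟩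
  haveI : NeZero (∏ t, p t) := ⟨(N_pos hp).ne'⟩
  have hN0 : (∏ j : Fin k, p j) ≠ 0 := (N_pos hp).ne'
  rw [G_eq _ hN0 R₀ m,
    Finset.prod_congr rfl (fun j _ => G_eq (p j) (hp j).ne_zero (R j) m),
    Finset.prod_mul_distrib]
  congr 1
  · rw [Nat.cast_prod, ← Finset.prod_pow, Finset.prod_inv_distrib]
  · rw [sum_range_eq_pi hp hinj]
    have hterm : ∀ y : ∀ j, ZMod (p j),
        e (-(((bOf (hcop_of hp hinj) y : ℕ) : ℝ) * (m : ℝ) / ((∏ t, p t : ℕ) : ℝ))) *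
          (inn (∏ t, p t) R₀ (bOf (hcop_of hp hinj) y)) ^ 3 =
        ∏ j, (e (-(((y j).val : ℝ) * (m : ℝ) / ((p j : ℕ) : ℝ))) *
          (inn (p j) (R j) ((y j).val)) ^ 3) := by
      intro y
      rw [e_bOf hp hinj m y, inn_factor hp hinj R hR R₀ hR₀ y, ← Finset.prod_pow,
        ← Finset.prod_mul_distrib]
    rw [Finset.sum_congr rfl (fun y _ => hterm y)]
    have rhs : ∏ j, (∑ b ∈ Finset.range (p j),
          e (-((b : ℝ) * (m : ℝ) / ((p j : ℕ) : ℝ))) * (inn (p j) (R j) b) ^ 3) =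
        ∑ y ∈ Fintype.piFinset (fun j : Fin k => (Finset.univ : Finset (ZMod (p j)))),
          ∏ j, (e (-(((y j).val : ℝ) * (m : ℝ) / ((p j : ℕ) : ℝ))) *
            (inn (p j) (R j) ((y j).val)) ^ 3) := by
      calc ∏ j, (∑ b ∈ Finset.range (p j),
            e (-((b : ℝ) * (m : ℝ) / ((p j : ℕ) : ℝ))) * (inn (p j) (R j) b) ^ 3)
          = ∏ j, ∑ z : ZMod (p j),
            (e (-((z.val : ℝ) * (m : ℝ) / ((p j : ℕ) : ℝ))) *
              (inn (p j) (R j) z.val) ^ 3) :=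
            Finset.prod_congr rfl (fun j _ => by rw [sum_range_zmod (p j)])
        _ = _ := Finset.prod_univ_sum _ _
    rw [rhs, Fintype.piFinset_univ]
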